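/- arXiv:1902.00959 — 4 statements merged into one kernel-verified Lean document; each statement's English description precedes it below -/
import Mathlib

section
/- If T = S² + S* where S is the unilateral shift on ℓ²(ℕ), then [T*, T] = e₁ ⊗ e₁. In particular T is hyponormal with rank-one self-commutator. -/
set_option maxHeartbeats 1000000


open ContinuousLinearMap

local notation "⟪" x ", " y "⟫_ℂ" => @inner ℂ _ _ x y

/-- For `T = S² + S*` with `S` the unilateral shift, `[T*, T] = e₁ ⊗ e₁`;
in particular `T` is hyponormal with rank-one self-commutator. -/
theorem toeplitz_self_commutator
    {H : Type*} [NormedAddCommGroup H] [InnerProductSpace ℂ H] [CompleteSpace H]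
    (e : HilbertBasis ℕ ℂ H) (S T : H →L[ℂ] H)
    (hS : ∀ n : ℕ, S (e n) = e (n + 1))
    (hT : T = S ^ 2 + adjoint S) :
    adjoint T * T - T * adjoint T = (innerSL ℂ (e 1)).smulRight (e 1) ∧
      (adjoint T * T - T * adjoint T).IsPositive := by
  have ho : ∀ i j : ℕ, ⟪e i, e j⟫_ℂ = if i = j then 1 else 0 :=
    orthonormal_iff_ite.mp e.orthonormal
  have hvec : ∀ x y : H, (∀ i, ⟪e i, x⟫_ℂ = ⟪e i, y⟫_ℂ) → x = y := by
    intro x y h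
    apply e.repr.injective
    ext i
    rw [e.repr_apply_apply, e.repr_apply_apply, h]
  have hS0 : adjoint S (e 0) = 0 := by
    apply hvec
    intro i
    rw [adjoint_inner_right, hS, ho, inner_zero_right]
    simp
  have hS' : ∀ n, adjoint S (e (n + 1)) = e n := by
    intro n
    apply hvec
    intro i
    rw [adjoint_inner_right, hS, ho, ho]
    simp
  have hTadj : adjoint T = adjoint S * adjoint S + S := by
    have h2 : adjoint (S * S) = adjoint S * adjoint S := by
      rw [← star_eq_adjoint, star_mul, star_eq_adjoint]
    have h1 : adjoint T = star T := rfl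
    rw [h1, hT]
    simp only [star_add, star_pow, star_eq_adjoint, adjoint_adjoint, pow_two, h2]
  have hTe : ∀ n, T (e n) = e (n + 2) + adjoint S (e n) := by
    intro n
    simp [hT, pow_two, mul_apply, add_apply, hS]
  have hTae : ∀ n, adjoint T (e n) = adjoint S (adjoint S (e n)) + e (n + 1) := by
    intro n
    simp [hTadj, mul_apply, add_apply, hS]
  have hA : ∀ n, adjoint T (T (e n)) - T (adjoint T (e n)) = ⟪e 1, e n⟫_ℂ • e 1 := by
    intro n
    match n with
    | 0 =>
      rw [hTe 0, hS0, add_zero (e (0 + 2) : H), hTae (0 + 2),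
        show adjoint S (e (0 + 2)) = e (0 + 1) from hS' (0 + 1),
        show adjoint S (e (0 + 1)) = e 0 from hS' 0,
        hTae 0, hS0, map_zero (adjoint S), zero_add (e (0 + 1) : H), hTe (0 + 1),
        show adjoint S (e (0 + 1)) = e 0 from hS' 0]
      simp only [show (0:ℕ) + 2 + 1 = 3 from rfl, show (0:ℕ) + 1 + 2 = 3 from rfl]
      rw [ho, if_neg (by omega), zero_smul]
      abel
    | 1 =>
      rw [hTe 1, show adjoint S (e 1) = e 0 from hS' 0, map_add, hTae (1 + 2),
        show adjoint S (e (1 + 2)) = e (1 + 1) from hS' (1 + 1),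
        show adjoint S (e (1 + 1)) = e 1 from hS' 1,
        hTae 0, hS0, map_zero, zero_add (e (0 + 1) : H),
        hTae 1, show adjoint S (e 1) = e 0 from hS' 0, hS0, zero_add (e (1 + 1) : H),
        hTe (1 + 1), show adjoint S (e (1 + 1)) = e 1 from hS' 1]
      simp only [show (1:ℕ) + 2 + 1 = 4 from rfl, show (1:ℕ) + 1 + 2 = 4 from rfl,
        show (0:ℕ) + 1 = 1 from rfl]
      rw [ho, if_pos rfl, one_smul]
      abel
    | 2 =>
      rw [hTe 2, show adjoint S (e 2) = e 1 from hS' 1, map_add, hTae (2 + 2),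
        show adjoint S (e (2 + 2)) = e 3 from hS' 3,
        show adjoint S (e 3) = e 2 from hS' 2,
        hTae 1, show adjoint S (e 1) = e 0 from hS' 0, hS0, zero_add (e (1 + 1) : H),
        hTae 2, show adjoint S (e 2) = e 1 from hS' 1,
        show adjoint S (e 1) = e 0 from hS' 0, map_add T,
        hTe 0, hS0, add_zero (e (0 + 2) : H), hTe (2 + 1),
        show adjoint S (e (2 + 1)) = e 2 from hS' 2]
      simp only [show (2:ℕ) + 2 + 1 = 5 from rfl, show (2:ℕ) + 1 + 2 = 5 from rfl,
        show (1:ℕ) + 1 = 2 from rfl, show (0:ℕ) + 2 = 2 from rfl]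
      rw [ho, if_neg (by omega), zero_smul]
      abel
    | (m + 3) =>
      rw [hTe (m + 3), show adjoint S (e (m + 3)) = e (m + 2) from hS' (m + 2), map_add,
        hTae (m + 3 + 2),
        show adjoint S (e (m + 3 + 2)) = e (m + 4) from hS' (m + 4),
        show adjoint S (e (m + 4)) = e (m + 3) from hS' (m + 3),
        hTae (m + 2),
        show adjoint S (e (m + 2)) = e (m + 1) from hS' (m + 1),
        show adjoint S (e (m + 1)) = e m from hS' m,
        hTae (m + 3),
        show adjoint S (e (m + 3)) = e (m + 2) from hS' (m + 2),
        show adjoint S (e (m + 2)) = e (m + 1) from hS' (m + 1), map_add T,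
        hTe (m + 1), show adjoint S (e (m + 1)) = e m from hS' m,
        hTe (m + 3 + 1),
        show adjoint S (e (m + 3 + 1)) = e (m + 3) from hS' (m + 3)]
      simp only [show m + 3 + 2 + 1 = m + 6 from rfl, show m + 3 + 1 + 2 = m + 6 from rfl,
        show m + 2 + 1 = m + 3 from rfl, show m + 1 + 2 = m + 3 from rfl]
      rw [ho, if_neg (by omega), zero_smul]
      abel
  have key : adjoint T * T - T * adjoint T = (innerSL ℂ (e 1)).smulRight (e 1) := by
    have hdense : Dense (Submodule.span ℂ (Set.range e) : Set H) := by
      rw [Submodule.dense_iff_topologicalClosure_eq_top]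
      exact e.dense_span
    apply ContinuousLinearMap.ext_on hdense
    rintro _ ⟨n, rfl⟩
    simpa [sub_apply, mul_apply] using hA n
  refine ⟨key, ?_, ?_⟩
  · refine IsSelfAdjoint.isSymmetric ?_
    show star _ = _
    simp only [star_sub, star_mul, star_eq_adjoint, adjoint_adjoint]
  · intro x
    rw [ContinuousLinearMap.reApplyInnerSelf, key]
    have hP : (innerSL ℂ (e 1)).smulRight (e 1) x = ⟪e 1, x⟫_ℂ • e 1 := rfl
    rw [hP, inner_smul_left, RCLike.conj_mul]
    simp
    rw [← Complex.ofReal_pow, Complex.ofReal_re]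
    positivity
end

section
/- Let T be a bounded operator on a Hilbert space H with [T*, T] = ξ ⊗ ξ for some vector ξ. If Tξ = aξ + bT*ξ for scalars a, b, then for every k ≥ 0, T maps the subspace H_k = span{ξ, T*ξ, ..., T*^k ξ} into H_{k+1}. -/
open ContinuousLinearMap

/-- If `[T*,T] = ξ ⊗ ξ` and `Tξ = aξ + bT*ξ`, then `T` maps
`H_k = span{ξ, T*ξ, …, T*^k ξ}` into `H_{k+1}`. -/
theorem maps_Hk_into_Hk_succ
    {H : Type*} [NormedAddCommGroup H] [InnerProductSpace ℂ H] [CompleteSpace H]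
    (T : H →L[ℂ] H) (ξ : H)
    (hcomm : adjoint T * T - T * adjoint T = (innerSL ℂ ξ).smulRight ξ)
    (a b : ℂ) (hTξ : T ξ = a • ξ + b • adjoint T ξ) (k : ℕ) :
    ∀ x ∈ Submodule.span ℂ {v | ∃ i ≤ k, v = (adjoint T ^ i) ξ},
      T x ∈ Submodule.span ℂ {v | ∃ i ≤ k + 1, v = (adjoint T ^ i) ξ} := by
  have hswap : ∀ x : H, T (adjoint T x) = adjoint T (T x) - (inner ℂ ξ x : ℂ) • ξ := by
    intro x
    have h := congrArg (fun S : H →L[ℂ] H => S x) hcomm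
    simp only [sub_apply, ContinuousLinearMap.mul_apply, smulRight_apply, innerSL_apply_apply] at h
    rw [← h]; abel
  -- monotonicity of the spans
  have hmono : ∀ {m n : ℕ}, m ≤ n →
      Submodule.span ℂ {v | ∃ i ≤ m, v = (adjoint T ^ i) ξ} ≤
      Submodule.span ℂ {v | ∃ i ≤ n, v = (adjoint T ^ i) ξ} := by
    intro m n hmn
    apply Submodule.span_mono
    rintro v ⟨i, hi, rfl⟩
    exact ⟨i, hi.trans hmn, rfl⟩
  -- adjoint T maps span S_m into span S_{m+1}
  have hadj : ∀ (m : ℕ) (x : H),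
      x ∈ Submodule.span ℂ {v | ∃ i ≤ m, v = (adjoint T ^ i) ξ} →
      adjoint T x ∈ Submodule.span ℂ {v | ∃ i ≤ m + 1, v = (adjoint T ^ i) ξ} := by
    intro m x hx
    induction hx using Submodule.span_induction with
    | mem v hv =>
      obtain ⟨i, hi, rfl⟩ := hv
      apply Submodule.subset_span
      exact ⟨i + 1, by omega, by rw [pow_succ', ContinuousLinearMap.mul_apply]⟩
    | zero => simp
    | add y z _ _ hy hz => rw [map_add]; exact add_mem hy hz
    | smul c y _ hy => rw [map_smul]; exact Submodule.smul_mem _ _ hy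
  -- key: T (T*^i ξ) ∈ span S_{i+1}
  have aux : ∀ i : ℕ, T ((adjoint T ^ i) ξ) ∈
      Submodule.span ℂ {v | ∃ j ≤ i + 1, v = (adjoint T ^ j) ξ} := by
    intro i
    induction i with
    | zero =>
      rw [pow_zero, ContinuousLinearMap.one_apply, hTξ]
      exact add_mem
        (Submodule.smul_mem _ _ (Submodule.subset_span ⟨0, by omega, by simp⟩))
        (Submodule.smul_mem _ _ (Submodule.subset_span ⟨1, by omega, by simp [pow_one]⟩))
    | succ n ih =>
      have hstep : T ((adjoint T ^ (n + 1)) ξ)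
          = adjoint T (T ((adjoint T ^ n) ξ))
            - (inner ℂ ξ ((adjoint T ^ n) ξ) : ℂ) • ξ := by
        rw [pow_succ', ContinuousLinearMap.mul_apply, hswap]
      rw [hstep]
      refine sub_mem (hadj _ _ ih) (Submodule.smul_mem _ _ ?_)
      exact Submodule.subset_span ⟨0, by omega, by simp⟩
  intro x hx
  induction hx using Submodule.span_induction with
  | mem v hv =>
    obtain ⟨i, hi, rfl⟩ := hv
    exact hmono (by omega) (aux i)
  | zero => simp
  | add y z _ _ hy hz => rw [map_add]; exact add_mem hy hz
  | smul c y _ hy => rw [map_smul]; exact Submodule.smul_mem _ _ hy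
end

section
/- Let T be a bounded operator with [T*,T] = ξ ⊗ ξ, and suppose Tξ = Q(T*)ξ for some polynomial Q. Then the subspace H_pol = closure of span{T*^k ξ : k ≥ 0} is invariant under both T and T*. -/
open ContinuousLinearMap

/-- If `[T*,T] = ξ ⊗ ξ` and `Tξ = Q(T*)ξ` for a polynomial `Q`, then the closed
span of `{T*^k ξ : k ≥ 0}` is invariant under both `T` and `T*`. -/
theorem Hpol_invariant
    {H : Type*} [NormedAddCommGroup H] [InnerProductSpace ℂ H] [CompleteSpace H]
    (T : H →L[ℂ] H) (ξ : H)
    (hcomm : adjoint T * T - T * adjoint T = (innerSL ℂ ξ).smulRight ξ)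
    (Q : Polynomial ℂ) (hTξ : T ξ = (Polynomial.aeval (adjoint T) Q) ξ) :
    ∀ x ∈ (Submodule.span ℂ
        (Set.range fun k : ℕ => (adjoint T ^ k) ξ)).topologicalClosure,
      T x ∈ (Submodule.span ℂ
          (Set.range fun k : ℕ => (adjoint T ^ k) ξ)).topologicalClosure ∧
        adjoint T x ∈ (Submodule.span ℂ
          (Set.range fun k : ℕ => (adjoint T ^ k) ξ)).topologicalClosure := by
  set A := adjoint T with hA
  set P := Submodule.span ℂ (Set.range fun k : ℕ => (A ^ k) ξ) with hP
  have hgen : ∀ k : ℕ, (A ^ k) ξ ∈ P := fun k => Submodule.subset_span ⟨k, rfl⟩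
  have hξP : ξ ∈ P := by simpa using hgen 0
  -- A maps P into P
  have hAmem : ∀ v ∈ P, A v ∈ P := by
    intro v hv
    induction hv using Submodule.span_induction with
    | mem x hx =>
      obtain ⟨k, rfl⟩ := hx
      have : A ((A ^ k) ξ) = (A ^ (k + 1)) ξ := by
        rw [pow_succ']; rfl
      rw [this]; exact hgen _
    | zero => simpa using P.zero_mem
    | add x y _ _ hx hy => simpa using P.add_mem hx hy
    | smul c x _ hx => simpa using P.smul_mem c hx
  -- polynomial evaluations at A applied to ξ are in P
  have haeval : ∀ q : Polynomial ℂ, (Polynomial.aeval A q) ξ ∈ P := by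
    intro q
    induction q using Polynomial.induction_on' with
    | add p q hp hq => simpa [map_add, add_apply] using P.add_mem hp hq
    | monomial n a =>
      have : (Polynomial.aeval A (Polynomial.monomial n a)) ξ = a • (A ^ n) ξ := by
        simp [Polynomial.aeval_monomial, Algebra.algebraMap_eq_smul_one,
          smul_mul_assoc, mul_apply']
      rw [this]; exact P.smul_mem a (hgen n)
  -- commutation relation
  have hcomm' : ∀ v : H, T (A v) = A (T v) - (innerSL ℂ ξ v) • ξ := by
    intro v
    have h : A (T v) - T (A v) = (innerSL ℂ ξ v) • ξ := by
      have h0 := congrArg (fun S : H →L[ℂ] H => S v) hcomm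
      simpa [sub_apply, mul_apply'] using h0
    rw [← h]; abel
  -- T maps generators into P
  have hTgen : ∀ k : ℕ, T ((A ^ k) ξ) ∈ P := by
    intro k
    induction k with
    | zero => simpa [hTξ, ← hA] using haeval Q
    | succ k ih =>
      have hk : (A ^ (k + 1)) ξ = A ((A ^ k) ξ) := by rw [pow_succ']; rfl
      rw [hk, hcomm']
      exact P.sub_mem (hAmem _ ih) (P.smul_mem _ hξP)
  have hTmem : ∀ v ∈ P, T v ∈ P := by
    intro v hv
    induction hv using Submodule.span_induction with
    | mem x hx => obtain ⟨k, rfl⟩ := hx; exact hTgen k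
    | zero => simpa using P.zero_mem
    | add x y _ _ hx hy => simpa using P.add_mem hx hy
    | smul c x _ hx => simpa using P.smul_mem c hx
  -- closure invariance
  have key : ∀ (S : H →L[ℂ] H), (∀ v ∈ P, S v ∈ P) →
      ∀ x ∈ P.topologicalClosure, S x ∈ P.topologicalClosure := by
    intro S hS x hx
    have hle : P.topologicalClosure ≤
        (P.topologicalClosure).comap (S : H →ₗ[ℂ] H) := by
      apply Submodule.topologicalClosure_minimal
      · intro v hv
        exact Submodule.le_topologicalClosure P (hS v hv)
      · exact IsClosed.preimage S.continuous P.isClosed_topologicalClosure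
    exact hle hx
  intro x hx
  exact ⟨key T hTmem x hx, key A hAmem x hx⟩
end

section
/- Let T be a bounded operator with [T*, T] = ξ ⊗ ξ and Tξ = Σ_{k=0}^d q_k T*^k ξ. With b_{j,k} = ⟨T*^k ξ, T*^j ξ⟩, for all m ≥ 0 and n ≥ 1 one has b_{m+1,n} = Σ_{k=0}^d q_k b_{m,k+n} - Σ_{j=0}^{n-1} b_{m,j} · b_{0,n-j-1}. -/
open ContinuousLinearMap

lemma comm_pow_aux
    {H : Type*} [NormedAddCommGroup H] [InnerProductSpace ℂ H] [CompleteSpace H]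
    (T : H →L[ℂ] H) (ξ : H)
    (hcomm : adjoint T * T - T * adjoint T = (innerSL ℂ ξ).smulRight ξ) :
    ∀ n : ℕ, T ((adjoint T ^ n) ξ) = (adjoint T ^ n) (T ξ) -
      ∑ j ∈ Finset.range n, (inner ℂ ξ ((adjoint T ^ (n - j - 1)) ξ) : ℂ) • (adjoint T ^ j) ξ := by
  have hpt : ∀ x : H, T (adjoint T x) = adjoint T (T x) - (inner ℂ ξ x : ℂ) • ξ := by
    intro x
    have := congrArg (fun f : H →L[ℂ] H => f x) hcomm
    simp only [sub_apply, ContinuousLinearMap.mul_apply, smulRight_apply, innerSL_apply_apply] at this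
    linear_combination (norm := module) -this
  intro n
  induction n with
  | zero => simp
  | succ n ih =>
    have h1 : (adjoint T ^ (n + 1)) ξ = adjoint T ((adjoint T ^ n) ξ) := by
      rw [pow_succ']; rfl
    rw [h1, hpt, ih, map_sub, map_sum]
    have h2 : (adjoint T ^ (n + 1)) (T ξ) = adjoint T ((adjoint T ^ n) (T ξ)) := by
      rw [pow_succ']; rfl
    rw [Finset.sum_range_succ' (fun j => (inner ℂ ξ ((adjoint T ^ (n + 1 - j - 1)) ξ) : ℂ) • (adjoint T ^ j) ξ)]
    have h3 : ∀ j, adjoint T ((inner ℂ ξ ((adjoint T ^ (n - j - 1)) ξ) : ℂ) • (adjoint T ^ j) ξ)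
        = (inner ℂ ξ ((adjoint T ^ (n + 1 - (j + 1) - 1)) ξ) : ℂ) • (adjoint T ^ (j + 1)) ξ := by
      intro j
      have he : n + 1 - (j + 1) - 1 = n - j - 1 := by omega
      rw [he, map_smul, pow_succ', ContinuousLinearMap.mul_apply]
    rw [Finset.sum_congr rfl (fun j _ => h3 j)]
    simp only [pow_zero, one_apply, Nat.add_sub_cancel, h2]
    abel

/-- If `[T*,T] = ξ ⊗ ξ` and `Tξ = Σ_{k≤d} q_k T*^k ξ`, then with
`b_{j,k} = ⟨T*^k ξ, T*^j ξ⟩` (linear in the first slot, so `b j k = inner (T*^j ξ) (T*^k ξ)`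
in Mathlib's convention), for all `m ≥ 0` and `n ≥ 1`:
`b_{m+1,n} = Σ_{k≤d} q_k b_{m,k+n} - Σ_{j<n} b_{m,j} b_{0,n-j-1}`. -/
theorem all_columns_recursion
    {H : Type*} [NormedAddCommGroup H] [InnerProductSpace ℂ H] [CompleteSpace H]
    (T : H →L[ℂ] H) (ξ : H)
    (hcomm : adjoint T * T - T * adjoint T = (innerSL ℂ ξ).smulRight ξ)
    (d : ℕ) (q : ℕ → ℂ)
    (hTξ : T ξ = ∑ k ∈ Finset.range (d + 1), q k • (adjoint T ^ k) ξ) :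
    ∀ m n : ℕ, 1 ≤ n →
      (inner ℂ ((adjoint T ^ (m + 1)) ξ) ((adjoint T ^ n) ξ) : ℂ) =
        ∑ k ∈ Finset.range (d + 1),
            q k * (inner ℂ ((adjoint T ^ m) ξ) ((adjoint T ^ (k + n)) ξ) : ℂ) -
          ∑ j ∈ Finset.range n,
            (inner ℂ ((adjoint T ^ m) ξ) ((adjoint T ^ j) ξ) : ℂ) *
              (inner ℂ ξ ((adjoint T ^ (n - j - 1)) ξ) : ℂ) := by
  intro m n _
  have h1 : (adjoint T ^ (m + 1)) ξ = adjoint T ((adjoint T ^ m) ξ) := by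
    rw [pow_succ']; rfl
  rw [h1, adjoint_inner_left, comm_pow_aux T ξ hcomm n, inner_sub_right]
  congr 1
  · rw [hTξ, map_sum]
    have : ∀ k, (adjoint T ^ n) (q k • (adjoint T ^ k) ξ) = q k • (adjoint T ^ (k + n)) ξ := by
      intro k
      rw [map_smul]
      congr 1
      rw [← ContinuousLinearMap.mul_apply, ← pow_add]
      congr 1
      ring
    rw [Finset.sum_congr rfl (fun k _ => this k), inner_sum]
    simp [inner_smul_right]
  · rw [inner_sum]
    simp [inner_smul_right, mul_comm]
end
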